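/- Let ρ_0, ρ_1 be density matrices with a priori probabilities η_0, η_1 > 0 (η_0 + η_1 = 1), and let {E_0, E_1, E_?} be a USD POVM (positive semi-definite, summing to identity, with Tr(E_0 ρ_1) = Tr(E_1 ρ_0) = 0). Then the failure probability Q = η_0 Tr(E_? ρ_0) + η_1 Tr(E_? ρ_1) satisfies Q ≥ 2 √(η_0 η_1) F, where F is the fidelity of ρ_0 and ρ_1. -/

import Mathlib

open Matrix ComplexOrder

/-- The square root of a positive semi-definite matrix, as defined in Mathlib (December 2024). -/
noncomputable def Matrix.PosSemidef.sqrt {n : Type*} {𝕜 : Type*} [Fintype n] [DecidableEq n]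
    [RCLike 𝕜] {A : Matrix n n 𝕜} (hA : A.PosSemidef) : Matrix n n 𝕜 :=
  hA.1.eigenvectorUnitary.1 * diagonal ((↑) ∘ (√·) ∘ hA.1.eigenvalues) *
  (star hA.1.eigenvectorUnitary : Matrix n n 𝕜)

lemma Matrix.PosSemidef.posSemidef_sqrt {n : Type*} {𝕜 : Type*} [Fintype n] [DecidableEq n]
    [RCLike 𝕜] {A : Matrix n n 𝕜} (hA : A.PosSemidef) : PosSemidef hA.sqrt := by
  apply PosSemidef.mul_mul_conjTranspose_same
  refine posSemidef_diagonal_iff.mpr fun i ↦ ?_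
  rw [Function.comp_apply, RCLike.nonneg_iff]
  constructor
  · simp only [RCLike.ofReal_re]; exact Real.sqrt_nonneg _
  · simp only [RCLike.ofReal_im]

lemma Matrix.PosSemidef.sqrt_mul_self {n : Type*} {𝕜 : Type*} [Fintype n] [DecidableEq n]
    [RCLike 𝕜] {A : Matrix n n 𝕜} (hA : A.PosSemidef) : hA.sqrt * hA.sqrt = A := by
  have hUU : (star hA.1.eigenvectorUnitary : Matrix n n 𝕜) * hA.1.eigenvectorUnitary.1 = 1 :=
    Unitary.coe_star_mul_self _
  have hD : diagonal (((↑) ∘ (√·) ∘ hA.1.eigenvalues : n → 𝕜)) *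
      diagonal (((↑) ∘ (√·) ∘ hA.1.eigenvalues : n → 𝕜)) =
      diagonal (RCLike.ofReal ∘ hA.1.eigenvalues : n → 𝕜) := by
    rw [diagonal_mul_diagonal]; congr 1; funext i
    simp only [Function.comp_apply, ← RCLike.ofReal_mul, Real.mul_self_sqrt (hA.eigenvalues_nonneg i)]
  conv_rhs => rw [hA.1.spectral_theorem, Unitary.conjStarAlgAut_apply, ← hD]
  unfold Matrix.PosSemidef.sqrt
  simp only [Matrix.mul_assoc]
  rw [← Matrix.mul_assoc (star hA.1.eigenvectorUnitary : Matrix n n 𝕜) _ _, hUU, Matrix.one_mul]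

/-- The matrix `√ρ₀ ρ₁ √ρ₀` is positive semi-definite. -/
noncomputable def sqrtConjPosSemidef {n : ℕ} {ρ₀ ρ₁ : Matrix (Fin n) (Fin n) ℂ}
    (h₀ : ρ₀.PosSemidef) (h₁ : ρ₁.PosSemidef) :
    (h₀.sqrt * ρ₁ * h₀.sqrt).PosSemidef := by
  have h := h₁.mul_mul_conjTranspose_same h₀.sqrt
  rwa [h₀.posSemidef_sqrt.1] at h

/-- The fidelity `F(ρ₀, ρ₁) = Tr √(√ρ₀ ρ₁ √ρ₀)` of two positive
semi-definite matrices. -/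
noncomputable def fidelity {n : ℕ} {ρ₀ ρ₁ : Matrix (Fin n) (Fin n) ℂ}
    (h₀ : ρ₀.PosSemidef) (h₁ : ρ₁.PosSemidef) : ℝ :=
  ((sqrtConjPosSemidef h₀ h₁).sqrt.trace).re

namespace USDaux

variable {n : ℕ}

lemma diag_nonneg {M : Matrix (Fin n) (Fin n) ℂ} (hM : M.PosSemidef) (i : Fin n) : 0 ≤ M i i := by
  exact hM.diag_nonneg

lemma trace_re_nonneg {M : Matrix (Fin n) (Fin n) ℂ} (hM : M.PosSemidef) : 0 ≤ M.trace.re := by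
  have h : (0:ℂ) ≤ M.trace :=
    Finset.sum_nonneg fun i _ => diag_nonneg hM i
  exact (Complex.le_def.mp h).1

lemma trace_mul_re_nonneg {M N : Matrix (Fin n) (Fin n) ℂ} (hM : M.PosSemidef)
    (hN : N.PosSemidef) : 0 ≤ ((M * N).trace).re := by
  obtain ⟨B, rfl⟩ : ∃ B : Matrix (Fin n) (Fin n) ℂ, M = Bᴴ * B :=
    ⟨hM.sqrt, by rw [hM.posSemidef_sqrt.1, hM.sqrt_mul_self]⟩
  rw [Matrix.mul_assoc, Matrix.trace_mul_comm]
  exact trace_re_nonneg (hN.mul_mul_conjTranspose_same B)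

lemma trace_conjTranspose_mul_self_re (M : Matrix (Fin n) (Fin n) ℂ) :
    ((Mᴴ * M).trace).re = ∑ j, ∑ i, Complex.normSq (M i j) := by
  rw [Matrix.trace]
  simp only [Matrix.diag, Matrix.mul_apply, Matrix.conjTranspose_apply]
  rw [Complex.re_sum]
  congr 1; ext j
  rw [Complex.re_sum]
  congr 1; ext i
  simp [Complex.normSq_apply, Complex.mul_re]

lemma trace_self_mul_conjTranspose_re (M : Matrix (Fin n) (Fin n) ℂ) :
    ((M * Mᴴ).trace).re = ∑ i, ∑ j, Complex.normSq (M i j) := by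
  rw [Matrix.trace_mul_comm, trace_conjTranspose_mul_self_re, Finset.sum_comm]

lemma eq_zero_of_trace_eq_zero {M : Matrix (Fin n) (Fin n) ℂ} (hM : M.PosSemidef)
    (h : M.trace = 0) : M = 0 := by
  classical
  have hS : hM.sqrt ᴴ * hM.sqrt = M := by
    rw [hM.posSemidef_sqrt.1, hM.sqrt_mul_self]
  have h0 : ((hM.sqrt ᴴ * hM.sqrt).trace).re = 0 := by rw [hS, h]; simp
  rw [trace_conjTranspose_mul_self_re] at h0
  have hz : ∀ i j, hM.sqrt i j = 0 := by
    intro i j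
    have := (Finset.sum_eq_zero_iff_of_nonneg (fun j _ => Finset.sum_nonneg
      (fun i _ => Complex.normSq_nonneg _))).mp h0 j (Finset.mem_univ j)
    have := (Finset.sum_eq_zero_iff_of_nonneg (fun i _ => Complex.normSq_nonneg _)).mp
      this i (Finset.mem_univ i)
    exact Complex.normSq_eq_zero.mp this
  have : hM.sqrt = 0 := by ext i j; exact hz i j
  rw [← hS, this]; simp

lemma sqrt_congr {M N : Matrix (Fin n) (Fin n) ℂ} (hM : M.PosSemidef) (hN : N.PosSemidef)
    (h : M = N) : hM.sqrt = hN.sqrt := by subst h; rfl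

lemma sum_cs (f g : Fin n → ℝ) (hf : ∀ i, 0 ≤ f i) (hg : ∀ i, 0 ≤ g i) :
    ∑ i, f i * g i ≤ Real.sqrt (∑ i, f i ^ 2) * Real.sqrt (∑ i, g i ^ 2) := by
  have h := Finset.sum_mul_sq_le_sq_mul_sq Finset.univ f g
  have h1 : ∑ i, f i * g i = Real.sqrt ((∑ i, f i * g i) ^ 2) := by
    rw [Real.sqrt_sq (Finset.sum_nonneg fun i _ => mul_nonneg (hf i) (hg i))]
  rw [h1, ← Real.sqrt_mul (Finset.sum_nonneg fun i _ => sq_nonneg _)]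
  exact Real.sqrt_le_sqrt h

lemma trace_sqrt_le (B C : Matrix (Fin n) (Fin n) ℂ)
    (hA : ((B * C) * (B * C)ᴴ).PosSemidef) :
    (hA.sqrt.trace).re ≤
      Real.sqrt (((B * Bᴴ).trace).re) * Real.sqrt (((Cᴴ * C).trace).re) := by
  classical
  set U : Matrix (Fin n) (Fin n) ℂ := (hA.1.eigenvectorUnitary : Matrix (Fin n) (Fin n) ℂ) with hUdef
  set lam : Fin n → ℝ := hA.1.eigenvalues with hlamdef
  have hU1 : Uᴴ * U = 1 := by
    rw [← Matrix.star_eq_conjTranspose]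
    exact Matrix.mem_unitaryGroup_iff'.mp hA.1.eigenvectorUnitary.2
  have hU2 : U * Uᴴ = 1 := by
    rw [← Matrix.star_eq_conjTranspose]
    exact Matrix.mem_unitaryGroup_iff.mp hA.1.eigenvectorUnitary.2
  have hst : (B * C) * (B * C)ᴴ = U * diagonal (fun i => (lam i : ℂ)) * Uᴴ := by
    have := hA.1.spectral_theorem
    rwa [Unitary.conjStarAlgAut_apply, Matrix.star_eq_conjTranspose] at this
  have hlam_nonneg : ∀ i, 0 ≤ lam i := fun i => hA.eigenvalues_nonneg i
  -- trace of sqrt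
  have hsqrt_tr : (hA.sqrt.trace).re = ∑ i, Real.sqrt (lam i) := by
    have : hA.sqrt = U * diagonal (fun i => ((Real.sqrt (lam i) : ℝ) : ℂ)) * Uᴴ := by
      rfl
    rw [this, Matrix.trace_mul_cycle, hU1, one_mul, Matrix.trace_diagonal, Complex.re_sum]
    simp
  -- the conjugated matrix
  set R : Matrix (Fin n) (Fin n) ℂ := Uᴴ * (B * C) with hRdef
  have hRH : Rᴴ = (B * C)ᴴ * U := by
    rw [hRdef, Matrix.conjTranspose_mul, Matrix.conjTranspose_conjTranspose]
  have hRR : R * Rᴴ = diagonal (fun i => (lam i : ℂ)) := by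
    rw [hRdef, hRH]
    calc Uᴴ * (B * C) * ((B * C)ᴴ * U)
        = Uᴴ * ((B * C) * (B * C)ᴴ) * U := by simp only [Matrix.mul_assoc]
      _ = (Uᴴ * U) * diagonal (fun i => (lam i : ℂ)) * (Uᴴ * U) := by
          rw [hst]; simp only [Matrix.mul_assoc]
      _ = diagonal (fun i => (lam i : ℂ)) := by rw [hU1, one_mul, mul_one]
  -- the partial isometry
  set g : Fin n → ℝ := fun i => if lam i = 0 then 0 else (Real.sqrt (lam i))⁻¹ with hgdef
  have hg_mul : ∀ i, lam i * g i = Real.sqrt (lam i) := by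
    intro i
    rw [hgdef]
    by_cases h : lam i = 0
    · simp [h]
    · have hs : Real.sqrt (lam i) ≠ 0 :=
        Real.sqrt_ne_zero'.mpr (lt_of_le_of_ne (hlam_nonneg i) (Ne.symm h))
      simp only [h, if_false]
      rw [← Real.mul_self_sqrt (hlam_nonneg i)]
      field_simp
      rw [Real.sqrt_sq (Real.sqrt_nonneg _)]
  have hg_proj : ∀ i, g i * lam i * g i = if lam i = 0 then 0 else 1 := by
    intro i
    rw [hgdef]
    by_cases h : lam i = 0
    · simp [h]
    · have hs : Real.sqrt (lam i) ≠ 0 :=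
        Real.sqrt_ne_zero'.mpr (lt_of_le_of_ne (hlam_nonneg i) (Ne.symm h))
      simp only [h, if_false]
      rw [← Real.mul_self_sqrt (hlam_nonneg i)]
      field_simp
      rw [Real.sqrt_sq (Real.sqrt_nonneg _)]
  set W : Matrix (Fin n) (Fin n) ℂ := Rᴴ * diagonal (fun i => (g i : ℂ)) with hWdef
  have hWH : Wᴴ = diagonal (fun i => (g i : ℂ)) * R := by
    rw [hWdef, Matrix.conjTranspose_mul, Matrix.conjTranspose_conjTranspose,
      Matrix.diagonal_conjTranspose]
    have hstar : (star fun i => ((g i : ℝ) : ℂ)) = fun i => ((g i : ℝ) : ℂ) := by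
      funext i
      simp [Complex.conj_ofReal]
    rw [hstar]
  have hRW : R * W = diagonal (fun i => ((Real.sqrt (lam i) : ℝ) : ℂ)) := by
    rw [hWdef, ← Matrix.mul_assoc, hRR, Matrix.diagonal_mul_diagonal]
    have : (fun i => (lam i : ℂ) * ((g i : ℝ) : ℂ)) = fun i => ((Real.sqrt (lam i) : ℝ) : ℂ) := by
      funext i
      rw [← Complex.ofReal_mul, hg_mul i]
    rw [this]
  have hWW : Wᴴ * W = diagonal (fun i => ((if lam i = 0 then (0:ℝ) else 1 : ℝ) : ℂ)) := by
    rw [hWH, hWdef, Matrix.mul_assoc, ← Matrix.mul_assoc R, hRR,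
      ← Matrix.mul_assoc, Matrix.diagonal_mul_diagonal, Matrix.diagonal_mul_diagonal]
    have : (fun i => ((g i : ℝ) : ℂ) * (lam i : ℂ) * ((g i : ℝ) : ℂ))
        = fun i => ((if lam i = 0 then (0:ℝ) else 1 : ℝ) : ℂ) := by
      funext i
      rw [← Complex.ofReal_mul, ← Complex.ofReal_mul, hg_proj i]
    rw [this]
  have hWe : W * diagonal (fun i => ((if lam i = 0 then (0:ℝ) else 1 : ℝ) : ℂ)) = W := by
    rw [hWdef, Matrix.mul_assoc, Matrix.diagonal_mul_diagonal]
    have : (fun i => ((g i : ℝ) : ℂ) * ((if lam i = 0 then (0:ℝ) else 1 : ℝ) : ℂ))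
        = fun i => ((g i : ℝ) : ℂ) := by
      funext i
      rw [← Complex.ofReal_mul]
      congr 1
      rw [hgdef]
      by_cases h : lam i = 0 <;> simp [h]
    rw [this]
  set Q : Matrix (Fin n) (Fin n) ℂ := W * Wᴴ with hQdef
  have hQH : Qᴴ = Q := by rw [hQdef, Matrix.conjTranspose_mul, Matrix.conjTranspose_conjTranspose]
  have hQ2 : Q * Q = Q := by
    rw [hQdef]
    calc W * Wᴴ * (W * Wᴴ) = W * (Wᴴ * W) * Wᴴ := by simp only [Matrix.mul_assoc]
      _ = W * Wᴴ := by rw [hWW, hWe]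
  have h1Q : (1 - Q).PosSemidef := by
    have hc : (1 - Q)ᴴ * (1 - Q) = 1 - Q := by
      rw [Matrix.conjTranspose_sub, Matrix.conjTranspose_one, hQH]
      simp only [mul_sub, sub_mul, one_mul, mul_one, hQ2]
      abel
    have := Matrix.posSemidef_conjTranspose_mul_self (1 - Q)
    rwa [hc] at this
  -- projection bound
  set N : Matrix (Fin n) (Fin n) ℂ := Cᴴ * C with hNdef
  have hN : N.PosSemidef := Matrix.posSemidef_conjTranspose_mul_self C
  have hproj : ((Wᴴ * (N * W)).trace).re ≤ (N.trace).re := by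
    have h1 : (Wᴴ * (N * W)).trace = (N * Q).trace := by
      rw [Matrix.trace_mul_comm, Matrix.mul_assoc, hQdef]
    have h2 : N.trace - (N * Q).trace = (N * (1 - Q)).trace := by
      rw [mul_sub, mul_one, Matrix.trace_sub]
    have h3 := trace_mul_re_nonneg hN h1Q
    rw [h1]
    have := congrArg Complex.re h2
    rw [Complex.sub_re] at this
    linarith
  -- Cauchy-Schwarz
  set P : Matrix (Fin n) (Fin n) ℂ := Uᴴ * B with hPdef
  set T : Matrix (Fin n) (Fin n) ℂ := C * W with hTdef
  have hPT : P * T = R * W := by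
    rw [hPdef, hTdef, hRdef]; simp only [Matrix.mul_assoc]
  set a : Fin n → ℝ := fun i => Real.sqrt (∑ j, Complex.normSq (P i j)) with hadef
  set b : Fin n → ℝ := fun i => Real.sqrt (∑ j, Complex.normSq (T j i)) with hbdef
  have hstep : ∀ i, Real.sqrt (lam i) ≤ a i * b i := by
    intro i
    have h1 : ((R * W) i i).re = Real.sqrt (lam i) := by rw [hRW]; simp
    rw [← h1, ← hPT, Matrix.mul_apply, Complex.re_sum]
    calc ∑ j, (P i j * T j i).re
        ≤ ∑ j, ‖P i j‖ * ‖T j i‖ := by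
          apply Finset.sum_le_sum
          intro j _
          calc (P i j * T j i).re ≤ ‖P i j * T j i‖ := Complex.re_le_norm _
            _ = ‖P i j‖ * ‖T j i‖ := norm_mul _ _
      _ ≤ Real.sqrt (∑ j, ‖P i j‖ ^ 2) * Real.sqrt (∑ j, ‖T j i‖ ^ 2) :=
          sum_cs _ _ (fun j => norm_nonneg _) (fun j => norm_nonneg _)
      _ = a i * b i := by rw [hadef, hbdef]; simp only [Complex.sq_norm]
  have ha_nonneg : ∀ i, 0 ≤ a i := fun i => Real.sqrt_nonneg _
  have hb_nonneg : ∀ i, 0 ≤ b i := fun i => Real.sqrt_nonneg _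
  have hsum1 : ∑ i, Real.sqrt (lam i) ≤ Real.sqrt (∑ i, a i ^ 2) * Real.sqrt (∑ i, b i ^ 2) :=
    le_trans (Finset.sum_le_sum fun i _ => hstep i) (sum_cs a b ha_nonneg hb_nonneg)
  have ha2 : ∑ i, a i ^ 2 = ((B * Bᴴ).trace).re := by
    have h1 : ∑ i, a i ^ 2 = ∑ i, ∑ j, Complex.normSq (P i j) := by
      apply Finset.sum_congr rfl
      intro i _
      rw [hadef, Real.sq_sqrt (Finset.sum_nonneg fun j _ => Complex.normSq_nonneg _)]
    have h2 : (P * Pᴴ).trace = (B * Bᴴ).trace := by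
      rw [hPdef, Matrix.conjTranspose_mul, Matrix.conjTranspose_conjTranspose,
        Matrix.trace_mul_comm]
      calc (Bᴴ * U * (Uᴴ * B)).trace = (Bᴴ * (U * Uᴴ) * B).trace := by
            simp only [Matrix.mul_assoc]
        _ = (B * Bᴴ).trace := by rw [hU2, mul_one, Matrix.trace_mul_comm]
    rw [h1, ← trace_self_mul_conjTranspose_re P, h2]
  have hb2 : ∑ i, b i ^ 2 ≤ ((Cᴴ * C).trace).re := by
    have h1 : ∑ i, b i ^ 2 = ∑ i, ∑ j, Complex.normSq (T j i) := by
      apply Finset.sum_congr rfl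
      intro i _
      rw [hbdef, Real.sq_sqrt (Finset.sum_nonneg fun j _ => Complex.normSq_nonneg _)]
    have h2 : (Tᴴ * T).trace = (Wᴴ * (N * W)).trace := by
      rw [hTdef, hNdef, Matrix.conjTranspose_mul]
      simp only [Matrix.mul_assoc]
    rw [h1, ← trace_conjTranspose_mul_self_re T, h2]
    exact hproj
  rw [hsqrt_tr]
  calc ∑ i, Real.sqrt (lam i)
      ≤ Real.sqrt (∑ i, a i ^ 2) * Real.sqrt (∑ i, b i ^ 2) := hsum1
    _ ≤ Real.sqrt (((B * Bᴴ).trace).re) * Real.sqrt (((Cᴴ * C).trace).re) := by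
        rw [ha2]
        exact mul_le_mul_of_nonneg_left (Real.sqrt_le_sqrt hb2) (Real.sqrt_nonneg _)


lemma mul_sqrt_eq_zero {E ρ : Matrix (Fin n) (Fin n) ℂ} (hE : E.PosSemidef) (hρ : ρ.PosSemidef)
    (h : (E * ρ).trace = 0) : E * hρ.sqrt = 0 := by
  classical
  set s := hρ.sqrt with hs
  have hsH : sᴴ = s := hρ.posSemidef_sqrt.1
  have htr : (s * E * s).trace = 0 := by
    calc (s * E * s).trace = (s * s * E).trace := by rw [Matrix.trace_mul_cycle]
      _ = (ρ * E).trace := by rw [hs, hρ.sqrt_mul_self]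
      _ = (E * ρ).trace := Matrix.trace_mul_comm _ _
      _ = 0 := h
  have hpsd : (s * E * s).PosSemidef := by
    have := hE.mul_mul_conjTranspose_same s
    rwa [hsH] at this
  have hzero : s * E * s = 0 := eq_zero_of_trace_eq_zero hpsd htr
  have hEH : hE.sqrt ᴴ = hE.sqrt := hE.posSemidef_sqrt.1
  have h2 : (hE.sqrt * s)ᴴ * (hE.sqrt * s) = s * E * s := by
    rw [Matrix.conjTranspose_mul, hEH, hsH]
    calc s * hE.sqrt * (hE.sqrt * s) = s * (hE.sqrt * hE.sqrt) * s := by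
          simp only [Matrix.mul_assoc]
      _ = s * E * s := by rw [hE.sqrt_mul_self]
  have h3 : hE.sqrt * s = 0 := by
    apply Matrix.conjTranspose_mul_self_eq_zero.mp
    rw [h2, hzero]
  calc E * s = hE.sqrt * (hE.sqrt * s) := by rw [← Matrix.mul_assoc, hE.sqrt_mul_self]
    _ = 0 := by rw [h3, mul_zero]

end USDaux

open USDaux

set_option maxHeartbeats 2000000 in
/-- For a USD POVM with a priori probabilities `η₀, η₁ > 0`, `η₀ + η₁ = 1`,
the failure probability `Q = η₀ Tr(E? ρ₀) + η₁ Tr(E? ρ₁)` satisfies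
`Q ≥ 2 √(η₀ η₁) F`. -/
theorem failure_prob_ge_two_sqrt_fidelity {n : ℕ}
    {ρ₀ ρ₁ E₀ E₁ Eq : Matrix (Fin n) (Fin n) ℂ}
    (h₀ : ρ₀.PosSemidef) (h₁ : ρ₁.PosSemidef)
    (ht₀ : ρ₀.trace = 1) (ht₁ : ρ₁.trace = 1)
    (hE₀ : E₀.PosSemidef) (hE₁ : E₁.PosSemidef) (hEq : Eq.PosSemidef)
    (hsum : E₀ + E₁ + Eq = 1)
    (hU₀ : (E₀ * ρ₁).trace = 0) (hU₁ : (E₁ * ρ₀).trace = 0)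
    {η₀ η₁ : ℝ} (hη₀ : 0 < η₀) (hη₁ : 0 < η₁) (hη : η₀ + η₁ = 1) :
    2 * Real.sqrt (η₀ * η₁) * fidelity h₀ h₁ ≤
      η₀ * ((Eq * ρ₀).trace).re + η₁ * ((Eq * ρ₁).trace).re := by
  classical
  set s₀ := h₀.sqrt with hs₀
  set s₁ := h₁.sqrt with hs₁
  set sq := hEq.sqrt with hsq
  have hs₀H : s₀ᴴ = s₀ := h₀.posSemidef_sqrt.1
  have hs₁H : s₁ᴴ = s₁ := h₁.posSemidef_sqrt.1
  have hsqH : sqᴴ = sq := hEq.posSemidef_sqrt.1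
  have hE₀s₁ : E₀ * s₁ = 0 := mul_sqrt_eq_zero hE₀ h₁ hU₀
  have hE₁s₀ : E₁ * s₀ = 0 := mul_sqrt_eq_zero hE₁ h₀ hU₁
  have hs₀E₁ : s₀ * E₁ = 0 := by
    have := congrArg Matrix.conjTranspose hE₁s₀
    rwa [Matrix.conjTranspose_mul, hs₀H, hE₁.1, Matrix.conjTranspose_zero] at this
  have hkey : s₀ * Eq * s₁ = s₀ * s₁ := by
    have h1 : s₀ * (E₀ + E₁ + Eq) * s₁ = s₀ * s₁ := by rw [hsum, mul_one]
    have h2 : s₀ * (E₀ + E₁ + Eq) * s₁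
        = s₀ * (E₀ * s₁) + (s₀ * E₁) * s₁ + s₀ * Eq * s₁ := by
      noncomm_ring
    rw [h2, hE₀s₁, hs₀E₁, mul_zero, zero_mul, zero_add, zero_add] at h1
    exact h1
  set B := s₀ * sq with hB
  set C := sq * s₁ with hC
  have hBC : B * C = s₀ * s₁ := by
    rw [hB, hC]
    calc s₀ * sq * (sq * s₁) = s₀ * (sq * sq) * s₁ := by simp only [Matrix.mul_assoc]
      _ = s₀ * Eq * s₁ := by rw [hEq.sqrt_mul_self]
      _ = s₀ * s₁ := hkey
  have hAA : s₀ * ρ₁ * s₀ = (B * C) * (B * C)ᴴ := by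
    rw [hBC, Matrix.conjTranspose_mul, hs₀H, hs₁H]
    calc s₀ * ρ₁ * s₀ = s₀ * (s₁ * s₁) * s₀ := by rw [h₁.sqrt_mul_self]
      _ = s₀ * s₁ * (s₁ * s₀) := by simp only [Matrix.mul_assoc]
  have hA : ((B * C) * (B * C)ᴴ).PosSemidef := Matrix.posSemidef_self_mul_conjTranspose _
  have hfid : fidelity h₀ h₁ = (hA.sqrt.trace).re := by
    unfold fidelity
    rw [sqrt_congr (sqrtConjPosSemidef h₀ h₁) hA hAA]
  have hBB : ((B * Bᴴ).trace) = (Eq * ρ₀).trace := by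
    rw [hB, Matrix.conjTranspose_mul, hs₀H, hsqH]
    calc (s₀ * sq * (sq * s₀)).trace = (s₀ * (sq * sq) * s₀).trace := by
          simp only [Matrix.mul_assoc]
      _ = (s₀ * Eq * s₀).trace := by rw [hEq.sqrt_mul_self]
      _ = (s₀ * s₀ * Eq).trace := by rw [Matrix.trace_mul_cycle]
      _ = (ρ₀ * Eq).trace := by rw [h₀.sqrt_mul_self]
      _ = (Eq * ρ₀).trace := Matrix.trace_mul_comm _ _
  have hCC : ((Cᴴ * C).trace) = (Eq * ρ₁).trace := by
    rw [hC, Matrix.conjTranspose_mul, hs₁H, hsqH]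
    calc (s₁ * sq * (sq * s₁)).trace = (s₁ * (sq * sq) * s₁).trace := by
          simp only [Matrix.mul_assoc]
      _ = (s₁ * Eq * s₁).trace := by rw [hEq.sqrt_mul_self]
      _ = (s₁ * s₁ * Eq).trace := by rw [Matrix.trace_mul_cycle]
      _ = (ρ₁ * Eq).trace := by rw [h₁.sqrt_mul_self]
      _ = (Eq * ρ₁).trace := Matrix.trace_mul_comm _ _
  set q₀ : ℝ := ((Eq * ρ₀).trace).re with hq₀def
  set q₁ : ℝ := ((Eq * ρ₁).trace).re with hq₁def
  have hq₀ : 0 ≤ q₀ := trace_mul_re_nonneg hEq h₀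
  have hq₁ : 0 ≤ q₁ := trace_mul_re_nonneg hEq h₁
  have hF : fidelity h₀ h₁ ≤ Real.sqrt q₀ * Real.sqrt q₁ := by
    rw [hfid]
    have h := trace_sqrt_le B C hA
    have hBBre : ((B * Bᴴ).trace).re = q₀ := by rw [hBB]
    have hCCre : ((Cᴴ * C).trace).re = q₁ := by rw [hCC]
    rwa [hBBre, hCCre] at h
  have hAM : 2 * Real.sqrt (η₀ * η₁) * (Real.sqrt q₀ * Real.sqrt q₁)
      ≤ η₀ * q₀ + η₁ * q₁ := by
    have e1 : Real.sqrt (η₀ * η₁) * (Real.sqrt q₀ * Real.sqrt q₁)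
        = Real.sqrt (η₀ * q₀) * Real.sqrt (η₁ * q₁) := by
      rw [Real.sqrt_mul hη₀.le, Real.sqrt_mul hη₀.le, Real.sqrt_mul hη₁.le]
      ring
    have e2 := sq_nonneg (Real.sqrt (η₀ * q₀) - Real.sqrt (η₁ * q₁))
    have e3 : Real.sqrt (η₀ * q₀) ^ 2 = η₀ * q₀ := Real.sq_sqrt (mul_nonneg hη₀.le hq₀)
    have e4 : Real.sqrt (η₁ * q₁) ^ 2 = η₁ * q₁ := Real.sq_sqrt (mul_nonneg hη₁.le hq₁)
    nlinarith [e1, e2, e3, e4]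
  calc 2 * Real.sqrt (η₀ * η₁) * fidelity h₀ h₁
      ≤ 2 * Real.sqrt (η₀ * η₁) * (Real.sqrt q₀ * Real.sqrt q₁) := by
        apply mul_le_mul_of_nonneg_left hF (by positivity)
    _ ≤ η₀ * q₀ + η₁ * q₁ := hAM
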